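/- arXiv:math/0109160 — 2 statements merged into one kernel-verified Lean document; each statement's English description precedes it below -/
import Mathlib

section
/- Let G = N ⋊ K be an internal semidirect product (N normal in G, G = NK, N ∩ K = 1). If K is hypercentral and K is an Aut-basis of G, then G = N × K (i.e., K centralizes N) and |N| ≤ 2. -/
universe u

theorem Subgroup.normal_iSup_of_normal {G : Type u} [Group G] {ι : Sort*}
    (f : ι → Subgroup G) (h : ∀ i, (f i).Normal) : (⨆ i, f i).Normal := by
  constructor
  intro x hx g
  refine Subgroup.iSup_induction (C := fun y => g * y * g⁻¹ ∈ ⨆ i, f i) f hx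
    (fun i y hy => le_iSup f i ((h i).conj_mem y hy g)) (by simpa using Subgroup.one_mem _) ?_
  intro a b ha hb
  have hab : g * (a * b) * g⁻¹ = (g * a * g⁻¹) * (g * b * g⁻¹) := by group
  rw [hab]; exact mul_mem ha hb

/-- The transfinite upper central series of a group, as ordinal-indexed normal subgroups. -/
noncomputable def transUpperCentralSeriesAux (G : Type u) [Group G] :
    Ordinal.{u} → {H : Subgroup G // H.Normal} := fun o =>
  Ordinal.limitRecOn o
    ⟨⊥, inferInstance⟩
    (fun _ Z => ⟨@upperCentralSeriesStep G _ Z.1 Z.2, by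
      haveI := Z.2; show (Subgroup.upperCentralSeriesStep Z.1).Normal
      rw [Subgroup.upperCentralSeriesStep_eq_comap_center]; infer_instance⟩)
    (fun o _ ih => ⟨⨆ (o' : Ordinal.{u}) (ho' : o' < o), (ih o' ho').1,
      Subgroup.normal_iSup_of_normal _ fun o' =>
        Subgroup.normal_iSup_of_normal _ fun ho' => (ih o' ho').2⟩)

/-- The transfinite upper central series. -/
noncomputable def transUpperCentralSeries (G : Type u) [Group G] (o : Ordinal.{u}) :
    Subgroup G := (transUpperCentralSeriesAux G o).1

/-- The hypercentre of a group: the union of the transfinite upper central series. -/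
noncomputable def hypercenter (G : Type u) [Group G] : Subgroup G :=
  ⨆ o : Ordinal.{u}, transUpperCentralSeries G o

/-- A group is hypercentral if it equals the union of its transfinite upper central series. -/
def IsHypercentral (G : Type u) [Group G] : Prop := hypercenter G = ⊤

/-- The hypercentral length: the least ordinal `o` with `Z_o(G) = G`. -/
noncomputable def hypercentralLength (G : Type u) [Group G] : Ordinal.{u} :=
  sInf {o : Ordinal.{u} | transUpperCentralSeries G o = ⊤}

/-- A group is locally nilpotent if every finitely generated subgroup is nilpotent. -/
def IsLocallyNilpotent (G : Type*) [Group G] : Prop :=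
  ∀ S : Subgroup G, S.FG → Group.IsNilpotent S


open Pointwise in
private theorem exists_retraction {G : Type u} [Group G] (N K : Subgroup G) [N.Normal]
    (hjoin : N ⊔ K = ⊤) (hmeet : N ⊓ K = ⊥) :
    ∃ p : G →* G, (∀ k ∈ K, p k = k) ∧ (∀ g, p g ∈ K) ∧ (∀ g, g * (p g)⁻¹ ∈ N) ∧
      (∀ n ∈ N, p n = 1) := by
  set q := QuotientGroup.mk' N with hq
  have hinj : Function.Injective (q.comp K.subtype) := by
    intro x y hxy
    have h1 : ((x : G))⁻¹ * (y : G) ∈ N := by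
      apply (QuotientGroup.eq (s := N)).mp
      exact hxy
    have h2 : ((x : G))⁻¹ * (y : G) ∈ N ⊓ K :=
      Subgroup.mem_inf.mpr ⟨h1, mul_mem (inv_mem x.2) y.2⟩
    rw [hmeet, Subgroup.mem_bot] at h2
    have : (x : G) = (y : G) := by
      rw [← mul_one (x : G), ← h2]; group
    exact Subtype.ext this
  have hsurj : Function.Surjective (q.comp K.subtype) := by
    intro g'
    obtain ⟨g, rfl⟩ := QuotientGroup.mk'_surjective N g'
    have hg : g ∈ (N : Set G) * (K : Set G) := by
      rw [← Subgroup.normal_mul, hjoin]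
      trivial
    obtain ⟨n, hn, k, hk, rfl⟩ := hg
    refine ⟨⟨k, hk⟩, ?_⟩
    show q k = q (n * k)
    rw [map_mul]
    have : q n = 1 := (QuotientGroup.eq_one_iff n).mpr hn
    rw [this, one_mul]
  set eqv := MulEquiv.ofBijective (q.comp K.subtype) ⟨hinj, hsurj⟩ with heqv
  have heqvap : ∀ x : K, eqv x = q (x : G) := fun x => rfl
  have hkey : ∀ k (hk : k ∈ K), eqv.symm (q k) = ⟨k, hk⟩ := by
    intro k hk
    apply eqv.injective
    rw [MulEquiv.apply_symm_apply, heqvap]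
  refine ⟨(K.subtype.comp eqv.symm.toMonoidHom).comp q, ?_, ?_, ?_, ?_⟩
  · intro k hk
    show ((eqv.symm (q k) : K) : G) = k
    rw [hkey k hk]
  · intro g
    exact (eqv.symm (q g)).2
  · intro g
    have hqp : q (((K.subtype.comp eqv.symm.toMonoidHom).comp q) g) = q g := by
      have := heqvap (eqv.symm (q g))
      rw [MulEquiv.apply_symm_apply] at this
      exact this.symm
    have h1 : q (g * (((K.subtype.comp eqv.symm.toMonoidHom).comp q) g)⁻¹) = 1 := by
      rw [map_mul, map_inv, hqp, mul_inv_cancel]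
    exact (QuotientGroup.eq_one_iff _).mp h1
  · intro n hn
    show ((eqv.symm (q n) : K) : G) = 1
    have h1 : q n = 1 := (QuotientGroup.eq_one_iff n).mpr hn
    rw [h1, map_one]
    rfl

private def conjMap {G : Type u} [Group G] (p : G →* G) (z : G) : G → G :=
  fun g => z * (g * (p g)⁻¹) * z⁻¹ * p g

private theorem centralizes_of_comm_cond {G : Type u} [Group G] (N K : Subgroup G) [hN : N.Normal]
    (p : G →* G) (hpK : ∀ k ∈ K, p k = k) (hpmem : ∀ g, p g ∈ K) (hpN : ∀ g, g * (p g)⁻¹ ∈ N)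
    (hpN1 : ∀ n ∈ N, p n = 1)
    (hbasis : ∀ φ : G ≃* G, (∀ k ∈ K, φ k = k) → ∀ g : G, φ g = g)
    (z : G)
    (hz : ∀ k ∈ K, z * k * z⁻¹ * k⁻¹ ∈ Subgroup.centralizer (N : Set G)) :
    z ∈ Subgroup.centralizer (N : Set G) := by
  have hfinv : ∀ (w : G) (g : G), conjMap p w (conjMap p w⁻¹ g) = g := by
    intro w g
    have hm : w⁻¹ * (g * (p g)⁻¹) * w⁻¹⁻¹ ∈ N := hN.conj_mem _ (hpN g) w⁻¹
    have h1 : p (conjMap p w⁻¹ g) = p g := by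
      show p (w⁻¹ * (g * (p g)⁻¹) * w⁻¹⁻¹ * p g) = p g
      rw [map_mul, hpN1 _ hm, hpK _ (hpmem g), one_mul]
    show w * (conjMap p w⁻¹ g * (p (conjMap p w⁻¹ g))⁻¹) * w⁻¹ * p (conjMap p w⁻¹ g) = g
    rw [h1]
    show w * ((w⁻¹ * (g * (p g)⁻¹) * w⁻¹⁻¹ * p g) * (p g)⁻¹) * w⁻¹ * p g = g
    group
  have hmul : ∀ g h : G, conjMap p z (g * h) = conjMap p z g * conjMap p z h := by
    intro g h
    have hRN : p g * (z * (h * (p h)⁻¹) * z⁻¹) * (p g)⁻¹ ∈ N :=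
      hN.conj_mem _ (hN.conj_mem _ (hpN h) z) (p g)
    have hcomm := Subgroup.mem_centralizer_iff.mp (hz (p g) (hpmem g)) _ hRN
    have key : z * (p g * (h * (p h)⁻¹) * (p g)⁻¹) * z⁻¹
        = p g * (z * (h * (p h)⁻¹) * z⁻¹) * (p g)⁻¹ := by
      calc z * (p g * (h * (p h)⁻¹) * (p g)⁻¹) * z⁻¹
          = (z * p g * z⁻¹ * (p g)⁻¹) * (p g * (z * (h * (p h)⁻¹) * z⁻¹) * (p g)⁻¹) *
            (z * p g * z⁻¹ * (p g)⁻¹)⁻¹ := by group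
        _ = _ := by rw [← hcomm]; group
    show z * (g * h * (p (g * h))⁻¹) * z⁻¹ * p (g * h) = _
    rw [map_mul]
    calc z * (g * h * (p g * p h)⁻¹) * z⁻¹ * (p g * p h)
        = (z * (g * (p g)⁻¹) * z⁻¹) * (z * (p g * (h * (p h)⁻¹) * (p g)⁻¹) * z⁻¹) *
          (p g * p h) := by group
      _ = (z * (g * (p g)⁻¹) * z⁻¹) * (p g * (z * (h * (p h)⁻¹) * z⁻¹) * (p g)⁻¹) *
          (p g * p h) := by rw [key]
      _ = _ := by show _ = z * (g * (p g)⁻¹) * z⁻¹ * p g * (z * (h * (p h)⁻¹) * z⁻¹ * p h); group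
  let φ : G ≃* G :=
    { toFun := conjMap p z
      invFun := conjMap p z⁻¹
      left_inv := fun g => by
        have := hfinv z⁻¹ g; rwa [inv_inv] at this
      right_inv := hfinv z
      map_mul' := hmul }
  have hfix : ∀ k ∈ K, φ k = k := by
    intro k hk
    show z * (k * (p k)⁻¹) * z⁻¹ * p k = k
    rw [hpK k hk]
    group
  have hall := hbasis φ hfix
  rw [Subgroup.mem_centralizer_iff]
  intro n hn
  have h2 : z * (n * (p n)⁻¹) * z⁻¹ * p n = n := hall n
  rw [hpN1 n hn] at h2
  calc n * z = (z * (n * 1⁻¹) * z⁻¹ * 1) * z := by rw [h2]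
    _ = z * n := by group

private def extMap {G : Type u} [Group G] (N : Subgroup G) (p : G →* G)
    (hpN : ∀ g, g * (p g)⁻¹ ∈ N) (e : ↥N ≃* ↥N) : G → G :=
  fun g => (e ⟨g * (p g)⁻¹, hpN g⟩ : G) * p g

private theorem aut_N_trivial {G : Type u} [Group G] (N K : Subgroup G) [hN : N.Normal]
    (p : G →* G) (hpK : ∀ k ∈ K, p k = k) (hpmem : ∀ g, p g ∈ K) (hpN : ∀ g, g * (p g)⁻¹ ∈ N)
    (hpN1 : ∀ n ∈ N, p n = 1)
    (hbasis : ∀ φ : G ≃* G, (∀ k ∈ K, φ k = k) → ∀ g : G, φ g = g)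
    (hcent : ∀ n ∈ N, ∀ k ∈ K, n * k = k * n)
    (e : ↥N ≃* ↥N) : ∀ m : ↥N, e m = m := by
  have hp1 : ∀ (e' : ↥N ≃* ↥N) (g : G), p (extMap N p hpN e' g) = p g := by
    intro e' g
    show p ((e' ⟨g * (p g)⁻¹, hpN g⟩ : G) * p g) = p g
    rw [map_mul, hpN1 _ (SetLike.coe_mem _), hpK _ (hpmem g), one_mul]
  have hFinv : ∀ (e' : ↥N ≃* ↥N) (g : G), extMap N p hpN e'.symm (extMap N p hpN e' g) = g := by
    intro e' g
    show (e'.symm ⟨extMap N p hpN e' g * (p (extMap N p hpN e' g))⁻¹, hpN _⟩ : G) *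
      p (extMap N p hpN e' g) = g
    have h2 : (⟨extMap N p hpN e' g * (p (extMap N p hpN e' g))⁻¹, hpN _⟩ : ↥N)
        = e' ⟨g * (p g)⁻¹, hpN g⟩ := by
      ext
      show extMap N p hpN e' g * (p (extMap N p hpN e' g))⁻¹ = _
      rw [hp1 e' g]
      show (e' ⟨g * (p g)⁻¹, hpN g⟩ : G) * p g * (p g)⁻¹ = _
      group
    rw [h2, MulEquiv.symm_apply_apply, hp1 e' g]
    show g * (p g)⁻¹ * p g = g
    group
  have hFmul : ∀ (e' : ↥N ≃* ↥N) (g h : G),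
      extMap N p hpN e' (g * h) = extMap N p hpN e' g * extMap N p hpN e' h := by
    intro e' g h
    have hsub : (⟨g * h * (p (g * h))⁻¹, hpN _⟩ : ↥N)
        = ⟨g * (p g)⁻¹, hpN g⟩ * ⟨h * (p h)⁻¹, hpN h⟩ := by
      ext
      show g * h * (p (g * h))⁻¹ = (g * (p g)⁻¹) * (h * (p h)⁻¹)
      rw [map_mul]
      have hc := hcent _ (hpN h) _ (hpmem g)
      calc g * h * (p g * p h)⁻¹ = g * (p g)⁻¹ * (p g * (h * (p h)⁻¹) * (p g)⁻¹) := by group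
        _ = g * (p g)⁻¹ * (h * (p h)⁻¹ * p g * (p g)⁻¹) := by rw [← hc]
        _ = _ := by group
    show (e' ⟨g * h * (p (g * h))⁻¹, hpN _⟩ : G) * p (g * h)
        = (e' ⟨g * (p g)⁻¹, hpN g⟩ : G) * p g * ((e' ⟨h * (p h)⁻¹, hpN h⟩ : G) * p h)
    rw [hsub, map_mul e', map_mul p]
    have hc2 := hcent _ (SetLike.coe_mem (e' ⟨h * (p h)⁻¹, hpN h⟩)) _ (hpmem g)
    push_cast
    calc (e' ⟨g * (p g)⁻¹, hpN g⟩ : G) * (e' ⟨h * (p h)⁻¹, hpN h⟩ : G) * (p g * p h)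
        = (e' ⟨g * (p g)⁻¹, hpN g⟩ : G) * ((e' ⟨h * (p h)⁻¹, hpN h⟩ : G) * p g) * p h := by
          group
      _ = (e' ⟨g * (p g)⁻¹, hpN g⟩ : G) * (p g * (e' ⟨h * (p h)⁻¹, hpN h⟩ : G)) * p h := by
          rw [hc2]
      _ = _ := by group
  let Φ : G ≃* G :=
    { toFun := extMap N p hpN e
      invFun := extMap N p hpN e.symm
      left_inv := hFinv e
      right_inv := fun g => by
        have := hFinv e.symm g; rwa [MulEquiv.symm_symm] at this
      map_mul' := hFmul e }
  have hfix : ∀ k ∈ K, Φ k = k := by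
    intro k hk
    show (e ⟨k * (p k)⁻¹, hpN k⟩ : G) * p k = k
    have hsub : (⟨k * (p k)⁻¹, hpN k⟩ : ↥N) = 1 := by
      ext
      show k * (p k)⁻¹ = 1
      rw [hpK k hk]
      group
    rw [hsub, map_one, OneMemClass.coe_one, one_mul, hpK k hk]
  have hall := hbasis Φ hfix
  intro m
  have h3 : (e ⟨(m : G) * (p (m : G))⁻¹, hpN _⟩ : G) * p (m : G) = (m : G) := hall m
  have hm1 : p (m : G) = 1 := hpN1 _ m.2
  have hsub : (⟨(m : G) * (p (m : G))⁻¹, hpN _⟩ : ↥N) = m := by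
    ext
    show (m : G) * (p (m : G))⁻¹ = m
    rw [hm1]
    group
  rw [hsub, hm1, mul_one] at h3
  exact Subtype.ext h3

private lemma zmod2_cases : ∀ c : ZMod 2, c = 0 ∨ c = 1 := by decide

private theorem card_le_two_of_trivial_aut {H : Type u} [Group H]
    (h : ∀ e : H ≃* H, ∀ x : H, e x = x) : Cardinal.mk H ≤ 2 := by
  classical
  have hcomm : ∀ a b : H, a * b = b * a := by
    intro a b
    have h1 := h (MulAut.conj a) b
    rw [MulAut.conj_apply] at h1
    calc a * b = (a * b * a⁻¹) * a := by group
      _ = b * a := by rw [h1]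
  letI : CommGroup H := { (inferInstance : Group H) with mul_comm := hcomm }
  have hinv : ∀ x : H, x⁻¹ = x := fun x => h (MulEquiv.inv H) x
  have horder : ∀ x : H, x * x = 1 := by
    intro x
    calc x * x = x⁻¹ * x := by rw [hinv]
      _ = 1 := inv_mul_cancel x
  have hdich : ∀ a b : H, a ≠ 1 → b ≠ 1 → a = b := by
    intro a b ha hb
    by_contra hab
    haveI : Fact (Nat.Prime 2) := ⟨Nat.prime_two⟩
    letI : Module (ZMod 2) (Additive H) := AddCommGroup.zmodModule (n := 2) (by
      intro x
      rw [two_nsmul]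
      exact horder x.toMul)
    set a' : Additive H := Additive.ofMul a with ha'def
    set b' : Additive H := Additive.ofMul b with hb'def
    have ha' : a' ≠ 0 := ha
    have hb' : b' ≠ 0 := hb
    have hab' : a' ≠ b' := hab
    have hli : LinearIndepOn (ZMod 2) id ({a', b'} : Set (Additive H)) := by
      refine linearIndepOn_id_pair ha' ?_
      intro c
      rcases zmod2_cases c with rfl | rfl
      · rw [zero_smul]; exact fun hc' => hb' hc'.symm
      · rw [one_smul]; exact hab'
    set B := Module.Basis.extend hli with hB
    have hamem : a' ∈ hli.extend (Set.subset_univ _) :=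
      hli.subset_extend _ (Set.mem_insert _ _)
    have hbmem : b' ∈ hli.extend (Set.subset_univ _) :=
      hli.subset_extend _ (Set.mem_insert_of_mem _ rfl)
    set ia : ↥(hli.extend (Set.subset_univ _)) := ⟨a', hamem⟩
    set ib : ↥(hli.extend (Set.subset_univ _)) := ⟨b', hbmem⟩
    set T := B.equiv B (Equiv.swap ia ib) with hT
    have hTa : T a' = b' := by
      have h1 : B ia = a' := Module.Basis.extend_apply_self hli ia
      have h2 : B ib = b' := Module.Basis.extend_apply_self hli ib
      rw [← h1, hT, Module.Basis.equiv_apply, Equiv.swap_apply_left, h2]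
    have he := h (MulEquiv.toAdditive.symm T.toAddEquiv) a
    have : T a' = a' := he
    rw [hTa] at this
    exact hab' this.symm
  have hinj : Function.Injective (fun y : H => ULift.up.{u} (decide (y = 1))) := by
    intro y z hyz
    simp only [ULift.up_inj] at hyz
    by_cases hy : y = 1 <;> by_cases hz : z = 1 <;> simp [hy, hz] at hyz ⊢
    · exact hdich y z hy hz
  calc Cardinal.mk H ≤ Cardinal.mk (ULift.{u} Bool) := Cardinal.mk_le_of_injective hinj
    _ = 2 := by simp

/-- Let `G = N ⋊ K` be an internal semidirect product.  If `K` is hypercentral and `K` is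
an Aut-basis of `G`, then `G = N × K` (i.e. `K` centralizes `N`) and `|N| ≤ 2`. -/
theorem autBasis_complement_centralizes {G : Type u} [Group G]
    (N K : Subgroup G) [N.Normal] (hjoin : N ⊔ K = ⊤) (hmeet : N ⊓ K = ⊥)
    (hhyp : IsHypercentral K)
    (hbasis : ∀ φ : G ≃* G, (∀ k ∈ K, φ k = k) → ∀ g : G, φ g = g) :
    (∀ n ∈ N, ∀ k ∈ K, n * k = k * n) ∧ Cardinal.mk N ≤ 2 := by
  obtain ⟨p, hpK, hpmem, hpN, hpN1⟩ := exists_retraction N K hjoin hmeet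
  have hKC : ∀ k ∈ K, k ∈ Subgroup.centralizer (N : Set G) := by
    have step : ∀ o : Ordinal.{u}, transUpperCentralSeries ↥K o ≤
        Subgroup.comap K.subtype (Subgroup.centralizer (N : Set G)) := by
      intro o
      induction o using Ordinal.limitRecOn with
      | zero =>
        have h0 : transUpperCentralSeries ↥K 0 = ⊥ := by
          show (transUpperCentralSeriesAux ↥K 0).1 = ⊥
          rw [transUpperCentralSeriesAux, Ordinal.limitRecOn_zero]
        rw [h0]; exact bot_le
      | add_one o ih =>
        haveI hinst := (transUpperCentralSeriesAux ↥K o).2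
        have hsucc : transUpperCentralSeries ↥K (o + 1) =
            upperCentralSeriesStep (transUpperCentralSeriesAux ↥K o).1 := by
          show (transUpperCentralSeriesAux ↥K (o + 1)).1 = _
          rw [transUpperCentralSeriesAux, Ordinal.limitRecOn_add_one]
          rfl
        intro z hz
        rw [hsucc] at hz
        rw [upperCentralSeriesStep, mem_upperCentralSeriesStep] at hz
        refine Subgroup.mem_comap.mpr
          (centralizes_of_comm_cond N K p hpK hpmem hpN hpN1 hbasis (z : G) ?_)
        intro k hk
        have h1 := ih (hz ⟨k, hk⟩)
        rw [Subgroup.mem_comap] at h1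
        simpa [commutatorElement_def] using h1
      | limit o ho ih =>
        have hlim : transUpperCentralSeries ↥K o =
            ⨆ (o' : Ordinal.{u}) (_ : o' < o), transUpperCentralSeries ↥K o' := by
          show (transUpperCentralSeriesAux ↥K o).1 = _
          rw [transUpperCentralSeriesAux, Ordinal.limitRecOn_limit _ _ _ _ ho]
          rfl
        rw [hlim]
        exact iSup₂_le fun o' ho' => ih o' ho'
    intro k hk
    have h1 : hypercenter ↥K ≤ Subgroup.comap K.subtype (Subgroup.centralizer (N : Set G)) :=
      iSup_le step
    rw [hhyp] at h1
    exact h1 (Subgroup.mem_top (⟨k, hk⟩ : ↥K))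
  have part1 : ∀ n ∈ N, ∀ k ∈ K, n * k = k * n := fun n hn k hk =>
    Subgroup.mem_centralizer_iff.mp (hKC k hk) n hn
  exact ⟨part1,
    card_le_two_of_trivial_aut (aut_N_trivial N K p hpK hpmem hpN hpN1 hbasis part1)⟩
end

section
/- Let H be a subgroup of a locally nilpotent group G. Then either G = I_G(H), the isolator of H in G, or there is an infinite cyclic section between H and G, i.e., there exist subgroups V ⊴ U of G with H ≤ V and U/V infinite cyclic. -/
universe u

open scoped commutatorElement

section AuxIsolator

open Subgroup

variable {G : Type*} [Group G]

/-- A subgroup containing the commutator subgroup is normal. -/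
lemma aux_normal_of_commutator_le {W : Subgroup G} (h : commutator G ≤ W) : W.Normal := by
  constructor
  intro v hv g
  have h1 : ⁅g, v⁆ ∈ W := by
    apply h
    rw [_root_.commutator_def]
    exact Subgroup.commutator_mem_commutator (Subgroup.mem_top g) (Subgroup.mem_top v)
  have h2 : g * v * g⁻¹ = ⁅g, v⁆ * v := by
    rw [commutatorElement_def]; group
  rw [h2]
  exact mul_mem h1 hv

lemma aux_comm_central_right (a b w : G) (hw : w ∈ Subgroup.center G) :
    ⁅a, b * w⁆ = ⁅a, b⁆ := by
  have key : w * a⁻¹ * w⁻¹ = a⁻¹ := by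
    rw [(Subgroup.mem_center_iff.mp hw a⁻¹).symm]; group
  have e : ⁅a, b * w⁆ = a * b * (w * a⁻¹ * w⁻¹) * b⁻¹ := by
    rw [commutatorElement_def]; group
  rw [e, key, commutatorElement_def]

lemma aux_comm_central_left (a b w : G) (hw : w ∈ Subgroup.center G) :
    ⁅a * w, b⁆ = ⁅a, b⁆ := by
  have key : w * b * w⁻¹ = b := by
    rw [← (Subgroup.mem_center_iff.mp hw b)]; group
  have e : ⁅a * w, b⁆ = a * (w * b * w⁻¹) * a⁻¹ * b⁻¹ := by
    rw [commutatorElement_def]; group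
  rw [e, key, commutatorElement_def]

lemma aux_comm_pow_right {a b : G} (hz : ⁅a, b⁆ ∈ Subgroup.center G) (k : ℕ) :
    ⁅a, b ^ k⁆ = ⁅a, b⁆ ^ k := by
  induction k with
  | zero => simp
  | succ k ih =>
    have e : ⁅a, b ^ (k + 1)⁆ = ⁅a, b ^ k⁆ * (b ^ k * (⁅a, b⁆) * (b ^ k)⁻¹) := by
      rw [pow_succ, commutatorElement_def, commutatorElement_def, commutatorElement_def]
      group
    have e2 : b ^ k * (⁅a, b⁆) * (b ^ k)⁻¹ = ⁅a, b⁆ := by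
      rw [(Subgroup.mem_center_iff.mp hz (b ^ k))]; group
    rw [e, e2, ih, pow_succ]

lemma aux_comm_pow_left {a b : G} (hz : ⁅a, b⁆ ∈ Subgroup.center G) (j : ℕ) :
    ⁅a ^ j, b⁆ = ⁅a, b⁆ ^ j := by
  induction j with
  | zero => simp
  | succ j ih =>
    have e : ⁅a ^ (j + 1), b⁆ = a ^ j * (⁅a, b⁆) * (a ^ j)⁻¹ * ⁅a ^ j, b⁆ := by
      rw [pow_succ, commutatorElement_def, commutatorElement_def, commutatorElement_def]
      group
    have e2 : a ^ j * (⁅a, b⁆) * (a ^ j)⁻¹ = ⁅a, b⁆ := by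
      rw [(Subgroup.mem_center_iff.mp hz (a ^ j))]; group
    rw [e, e2, ih, pow_succ']

lemma aux_lcs_map_surjective {A B : Type*} [Group A] [Group B] (f : A →* B)
    (hf : Function.Surjective f) : ∀ n, ((⊤ : Subgroup A).lowerCentralSeries n).map f = (⊤ : Subgroup B).lowerCentralSeries n
  | 0 => by
    simpa using Subgroup.map_top_of_surjective f hf
  | n + 1 => by
    show Subgroup.map f ⁅(⊤ : Subgroup A).lowerCentralSeries n, ⊤⁆ = ⁅(⊤ : Subgroup B).lowerCentralSeries n, ⊤⁆
    rw [Subgroup.map_commutator, aux_lcs_map_surjective f hf n,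
      Subgroup.map_top_of_surjective f hf]

end AuxIsolator

section ThmD

open Subgroup

/-- If a nilpotent group is "torsion modulo `H` and the commutator subgroup", then it is
torsion modulo `H`. -/
theorem aux_thmD : ∀ (n : ℕ) (G : Type u) [Group G] (H : Subgroup G),
    (⊤ : Subgroup G).lowerCentralSeries n = ⊥ →
    (∀ u : G, ∃ k : ℕ, 0 < k ∧ u ^ k ∈ H ⊔ commutator G) →
    ∀ u : G, ∃ k : ℕ, 0 < k ∧ u ^ k ∈ H := by
  intro n
  induction n with
  | zero =>
    intro G _ H hbot _ u
    have hu : u ∈ (⊥ : Subgroup G) := by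
      rw [← hbot]; exact Subgroup.mem_top u
    refine ⟨1, Nat.one_pos, ?_⟩
    rw [Subgroup.mem_bot.mp hu]
    simpa using H.one_mem
  | succ n ih =>
    intro G _ H hbot hyp u
    rcases n with _ | m
    · -- abelian case
      have hcomm : commutator G = ⊥ := by
        rw [← top_lowerCentralSeries_one]; exact hbot
      obtain ⟨k, hk, hmem⟩ := hyp u
      rw [hcomm, sup_bot_eq] at hmem
      exact ⟨k, hk, hmem⟩
    · -- general case
      have hγsucc : (⊤ : Subgroup G).lowerCentralSeries (m + 2) = ⁅(⊤ : Subgroup G).lowerCentralSeries (m + 1), ⊤⁆ := rfl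
      have hγZ : (⊤ : Subgroup G).lowerCentralSeries (m + 1) ≤ Subgroup.center G := by
        intro a ha
        rw [Subgroup.mem_center_iff]
        intro g
        have h1 : ⁅a, g⁆ ∈ (⊥ : Subgroup G) := by
          rw [← hbot, hγsucc]
          exact Subgroup.commutator_mem_commutator ha (Subgroup.mem_top g)
        exact (commutatorElement_eq_one_iff_mul_comm.mp (Subgroup.mem_bot.mp h1)).symm
      set γ := (⊤ : Subgroup G).lowerCentralSeries (m + 1) with hγdef
      let π : G →* G ⧸ γ := QuotientGroup.mk' γ
      have hπsurj : Function.Surjective π := QuotientGroup.mk'_surjective γ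
      have hker : ∀ g : G, π g = 1 ↔ g ∈ γ := fun g => QuotientGroup.eq_one_iff g
      have hlcsQ : (⊤ : Subgroup (G ⧸ γ)).lowerCentralSeries (m + 1) = ⊥ := by
        rw [← aux_lcs_map_surjective π hπsurj (m + 1)]
        rw [eq_bot_iff]
        intro q hq
        rw [Subgroup.mem_map] at hq
        obtain ⟨g, hg, rfl⟩ := hq
        rw [Subgroup.mem_bot]
        exact (hker g).mpr hg
      have hypQ : ∀ v : G ⧸ γ, ∃ k : ℕ, 0 < k ∧ v ^ k ∈ H.map π ⊔ commutator (G ⧸ γ) := by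
        intro v
        obtain ⟨w, rfl⟩ := hπsurj v
        obtain ⟨k, hk, hmem⟩ := hyp w
        refine ⟨k, hk, ?_⟩
        have hle : Subgroup.map π (H ⊔ commutator G) ≤ H.map π ⊔ commutator (G ⧸ γ) := by
          rw [Subgroup.map_sup]
          have : Subgroup.map π (commutator G) = commutator (G ⧸ γ) := by
            rw [_root_.commutator_def, Subgroup.map_commutator, _root_.commutator_def,
              Subgroup.map_top_of_surjective π hπsurj]
          rw [this]
        rw [← map_pow]
        exact hle (Subgroup.mem_map_of_mem π hmem)
      have Dget : ∀ w : G, ∃ k : ℕ, 0 < k ∧ ∃ h ∈ H, h⁻¹ * w ^ k ∈ γ := by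
        intro w
        obtain ⟨k, hk, hmem⟩ := ih (G ⧸ γ) (H.map π) hlcsQ hypQ (π w)
        rw [← map_pow, Subgroup.mem_map] at hmem
        obtain ⟨h, hh, hEq⟩ := hmem
        refine ⟨k, hk, h, hh, ?_⟩
        have : π (h⁻¹ * w ^ k) = 1 := by
          rw [map_mul, map_inv, hEq]; group
        exact (hker _).mp this
      have hcent : ∀ a ∈ (⊤ : Subgroup G).lowerCentralSeries m, ∀ b : G, ⁅a, b⁆ ∈ Subgroup.center G := by
        intro a ha b
        refine hγZ ?_
        show ⁅a, b⁆ ∈ (⊤ : Subgroup G).lowerCentralSeries (m + 1)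
        exact Subgroup.commutator_mem_commutator ha (Subgroup.mem_top b)
      -- the central elements having a power in H form a subgroup
      let T : Subgroup G :=
        { carrier := {z | z ∈ Subgroup.center G ∧ ∃ p : ℕ, 0 < p ∧ z ^ p ∈ H}
          one_mem' := ⟨Subgroup.one_mem _, 1, Nat.one_pos, by simpa using H.one_mem⟩
          mul_mem' := by
            rintro a b ⟨haZ, p, hp, hpH⟩ ⟨hbZ, q, hq, hqH⟩
            refine ⟨Subgroup.mul_mem _ haZ hbZ, p * q, Nat.mul_pos hp hq, ?_⟩
            have hab : Commute a b := (Subgroup.mem_center_iff.mp haZ b).symm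
            rw [hab.mul_pow]
            refine H.mul_mem ?_ ?_
            · rw [pow_mul]; exact pow_mem hpH q
            · rw [mul_comm p q, pow_mul]; exact pow_mem hqH p
          inv_mem' := by
            rintro a ⟨haZ, p, hp, hpH⟩
            exact ⟨Subgroup.inv_mem _ haZ, p, hp, by rw [inv_pow]; exact H.inv_mem hpH⟩ }
      have hγT : γ ≤ T := by
        have : ⁅(⊤ : Subgroup G).lowerCentralSeries m, (⊤ : Subgroup G)⁆ ≤ T := by
          rw [Subgroup.commutator_le]
          intro a ha b _
          have hzab : ⁅a, b⁆ ∈ Subgroup.center G := hcent a ha b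
          obtain ⟨j, hj, h', hh', hw'⟩ := Dget a
          obtain ⟨k, hk, h, hh, hw⟩ := Dget b
          have hzw' : h'⁻¹ * a ^ j ∈ Subgroup.center G := hγZ hw'
          have hzw : h⁻¹ * b ^ k ∈ Subgroup.center G := hγZ hw
          have ha' : a ^ j = h' * (h'⁻¹ * a ^ j) := by group
          have hb' : b ^ k = h * (h⁻¹ * b ^ k) := by group
          have e1 : ⁅a ^ j, b ^ k⁆ = ⁅a, b⁆ ^ (k * j) := by
            have h1 : ⁅a, b ^ k⁆ = ⁅a, b⁆ ^ k := aux_comm_pow_right hzab k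
            have h2 : ⁅a, b ^ k⁆ ∈ Subgroup.center G := by
              rw [h1]; exact pow_mem hzab k
            rw [aux_comm_pow_left h2 j, h1, ← pow_mul]
          have e2 : ⁅a ^ j, b ^ k⁆ = ⁅h', h⁆ := by
            rw [ha', hb', aux_comm_central_right _ _ _ hzw, aux_comm_central_left _ _ _ hzw']
          refine ⟨hzab, k * j, Nat.mul_pos hk hj, ?_⟩
          rw [← e1, e2, commutatorElement_def]
          exact H.mul_mem (H.mul_mem (H.mul_mem hh' hh) (H.inv_mem hh')) (H.inv_mem hh)
        exact this
      obtain ⟨k, hk, h, hh, hwγ⟩ := Dget u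
      obtain ⟨hzw, p, hp, hpH⟩ := hγT hwγ
      refine ⟨k * p, Nat.mul_pos hk hp, ?_⟩
      have hcomm2 : Commute h (h⁻¹ * u ^ k) := Subgroup.mem_center_iff.mp hzw h
      have e3 : u ^ (k * p) = (h * (h⁻¹ * u ^ k)) ^ p := by
        rw [pow_mul]
        congr 1
        group
      rw [e3, hcomm2.mul_pow]
      exact H.mul_mem (pow_mem hh p) hpH

end ThmD

section Assembly

open Subgroup

variable {G : Type u} [Group G]

lemma aux_mem_sup_left {A B : Subgroup G} {g : G} (h : g ∈ A) : g ∈ A ⊔ B :=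
  (le_sup_left : A ≤ A ⊔ B) h

lemma aux_mem_sup_right {A B : Subgroup G} {g : G} (h : g ∈ B) : g ∈ A ⊔ B :=
  (le_sup_right : B ≤ A ⊔ B) h

/-- Closure-induction for the subtype of a closure. -/
lemma aux_closure_subtype_le (s : Set G) (P : Subgroup ↥(Subgroup.closure s))
    (hP : ∀ (g : G) (hg : g ∈ Subgroup.closure s), g ∈ s →
      (⟨g, hg⟩ : ↥(Subgroup.closure s)) ∈ P) :
    ∀ v, v ∈ P := by
  intro v
  have htop : (⊤ : Subgroup ↥(Subgroup.closure s)) ≤ P := by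
    rw [← Subgroup.closure_closure_coe_preimage (k := s)]
    exact (Subgroup.closure_le P).mpr (fun w hw => hP w.1 w.2 hw)
  exact htop (Subgroup.mem_top v)

/-- The key contradiction: if some positive power of `x` lies in
`H ⊔ ⁅⟨H,x⟩, ⟨H,x⟩⁆`, then some positive power of `x` lies in `H`. -/
lemma aux_keylemma (hG : IsLocallyNilpotent G) (H : Subgroup G) (x : G) (n : ℕ) (hn : 0 < n)
    (hmem : x ^ n ∈ H ⊔ ⁅Subgroup.closure (↑H ∪ {x}), Subgroup.closure (↑H ∪ {x})⁆) :
    ∃ k : ℕ, 0 < k ∧ x ^ k ∈ H := by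
  classical
  set U : Subgroup G := Subgroup.closure (↑H ∪ {x}) with hUdef
  let Idx := {T : Finset G // ↑T ⊆ (H : Set G)}
  let Fn : Finset G → Subgroup G := fun T => Subgroup.closure (↑T ∪ {x})
  let fam : Idx → Subgroup G := fun T => Subgroup.closure (↑T.1) ⊔ ⁅Fn T.1, Fn T.1⁆
  have hFnmono : ∀ {T₁ T₂ : Finset G}, T₁ ⊆ T₂ → Fn T₁ ≤ Fn T₂ := by
    intro T₁ T₂ h
    exact Subgroup.closure_mono (Set.union_subset_union_left _ (by exact_mod_cast h))
  have hfammono : ∀ {S₁ S₂ : Idx}, S₁.1 ⊆ S₂.1 → fam S₁ ≤ fam S₂ := by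
    intro S₁ S₂ h
    exact sup_le_sup (Subgroup.closure_mono (by exact_mod_cast h))
      (Subgroup.commutator_mono (hFnmono h) (hFnmono h))
  haveI : Nonempty Idx := ⟨⟨∅, by simp⟩⟩
  have hdir : Directed (· ≤ ·) fam := by
    intro S₁ S₂
    refine ⟨⟨S₁.1 ∪ S₂.1, ?_⟩, hfammono Finset.subset_union_left,
      hfammono Finset.subset_union_right⟩
    push_cast
    exact Set.union_subset S₁.2 S₂.2
  have hdir' : Directed (· ≤ ·) (fun S : Idx => Fn S.1) := by
    intro S₁ S₂
    exact ⟨⟨S₁.1 ∪ S₂.1, by push_cast; exact Set.union_subset S₁.2 S₂.2⟩,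
      hFnmono Finset.subset_union_left, hFnmono Finset.subset_union_right⟩
  have hUfam : U ≤ ⨆ S : Idx, Fn S.1 := by
    rw [hUdef]
    apply (Subgroup.closure_le _).mpr
    rintro g (hgH | hgx)
    · exact le_iSup (fun S : Idx => Fn S.1) (⟨{g}, by simpa using hgH⟩ : Idx)
        (Subgroup.subset_closure (Or.inl (by simp)))
    · exact le_iSup (fun S : Idx => Fn S.1) (⟨∅, by simp⟩ : Idx)
        (Subgroup.subset_closure (Or.inr hgx))
  have hsup : H ⊔ ⁅U, U⁆ ≤ ⨆ S : Idx, fam S := by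
    apply sup_le
    · intro h hh
      refine le_iSup fam (⟨{h}, by simpa using hh⟩ : Idx) ?_
      exact aux_mem_sup_left (Subgroup.subset_closure (by simp))
    · rw [Subgroup.commutator_le]
      intro g₁ hg₁ g₂ hg₂
      have h1 : g₁ ∈ ⨆ S : Idx, Fn S.1 := hUfam hg₁
      have h2 : g₂ ∈ ⨆ S : Idx, Fn S.1 := hUfam hg₂
      rw [Subgroup.mem_iSup_of_directed hdir'] at h1 h2
      obtain ⟨S₁, hS₁⟩ := h1
      obtain ⟨S₂, hS₂⟩ := h2
      have hc : ⁅g₁, g₂⁆ ∈ ⁅Fn (S₁.1 ∪ S₂.1), Fn (S₁.1 ∪ S₂.1)⁆ :=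
        Subgroup.commutator_mem_commutator (hFnmono Finset.subset_union_left hS₁)
          (hFnmono Finset.subset_union_right hS₂)
      refine le_iSup fam
        (⟨S₁.1 ∪ S₂.1, by push_cast; exact Set.union_subset S₁.2 S₂.2⟩ : Idx) ?_
      exact aux_mem_sup_right hc
  have hxsup : x ^ n ∈ ⨆ S : Idx, fam S := hsup hmem
  rw [Subgroup.mem_iSup_of_directed hdir] at hxsup
  obtain ⟨⟨T, hTH⟩, hxT⟩ := hxsup
  -- now work inside the finitely generated nilpotent group F
  have hxF : x ∈ Subgroup.closure ((↑T : Set G) ∪ {x}) := Subgroup.subset_closure (Or.inr rfl)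
  set F : Subgroup G := Subgroup.closure ((↑T : Set G) ∪ {x}) with hFdef
  have hFfg : F.FG := by
    rw [Subgroup.fg_iff]
    exact ⟨(↑T : Set G) ∪ {x}, rfl, Set.Finite.union (Finset.finite_toSet T)
      (Set.finite_singleton x)⟩
  have hnil : Group.IsNilpotent ↥F := hG F hFfg
  set WF : Subgroup ↥F := H.subgroupOf F ⊔ commutator ↥F with hWFdef
  have hTF : (↑T : Set G) ⊆ (F : Set G) := fun t ht => Subgroup.subset_closure (Or.inl ht)
  have hWFmap : Subgroup.closure (↑T : Set G) ⊔ ⁅F, F⁆ ≤ Subgroup.map F.subtype WF := by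
    apply sup_le
    · have h1 : Subgroup.closure (↑T : Set G) ≤ H ⊓ F :=
        le_inf ((Subgroup.closure_le H).mpr hTH) ((Subgroup.closure_le F).mpr hTF)
      rw [← Subgroup.subgroupOf_map_subtype H F] at h1
      exact h1.trans (Subgroup.map_mono le_sup_left)
    · have h2 : ⁅F, F⁆ = Subgroup.map F.subtype (commutator ↥F) := by
        rw [_root_.commutator_def, Subgroup.map_commutator]
        congr 1 <;>
          rw [← MonoidHom.range_eq_map, Subgroup.range_subtype]
      rw [h2]
      exact Subgroup.map_mono le_sup_right
  have hxWF : (⟨x, hxF⟩ : ↥F) ^ n ∈ WF := by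
    have hx2 : x ^ n ∈ Subgroup.map F.subtype WF := hWFmap hxT
    rw [Subgroup.mem_map] at hx2
    obtain ⟨w, hw, hwx⟩ := hx2
    have : w = (⟨x, hxF⟩ : ↥F) ^ n := by
      apply Subtype.ext
      simpa using hwx
    rwa [this] at hw
  haveI hWFnormal : WF.Normal := aux_normal_of_commutator_le le_sup_right
  have hPtop : ∀ v : ↥F, ∃ k : ℕ, 0 < k ∧ v ^ k ∈ WF := by
    let π : ↥F →* ↥F ⧸ WF := QuotientGroup.mk' WF
    let P : Subgroup ↥F :=
      { carrier := {v | ∃ k : ℕ, 0 < k ∧ v ^ k ∈ WF}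
        one_mem' := ⟨1, Nat.one_pos, by simpa using WF.one_mem⟩
        mul_mem' := by
          rintro a b ⟨k, hk, hak⟩ ⟨j, hj, hbj⟩
          refine ⟨k * j, Nat.mul_pos hk hj, ?_⟩
          have hcomm : Commute (π a) (π b) := by
            rw [← commutatorElement_eq_one_iff_commute, ← map_commutatorElement]
            exact (QuotientGroup.eq_one_iff _).mpr
              (aux_mem_sup_right
                (Subgroup.commutator_mem_commutator (Subgroup.mem_top a) (Subgroup.mem_top b)))
          have ha1 : π (a ^ k) = 1 := (QuotientGroup.eq_one_iff _).mpr hak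
          have hb1 : π (b ^ j) = 1 := (QuotientGroup.eq_one_iff _).mpr hbj
          have e1 : (π a) ^ (k * j) = 1 := by
            rw [pow_mul, ← map_pow, ha1, one_pow]
          have e2 : (π b) ^ (k * j) = 1 := by
            rw [mul_comm k j, pow_mul, ← map_pow, hb1, one_pow]
          have : π ((a * b) ^ (k * j)) = 1 := by
            rw [map_pow, map_mul, hcomm.mul_pow, e1, e2, one_mul]
          exact (QuotientGroup.eq_one_iff _).mp this
        inv_mem' := by
          rintro a ⟨k, hk, hak⟩
          exact ⟨k, hk, by rw [inv_pow]; exact WF.inv_mem hak⟩ }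
    intro v
    refine aux_closure_subtype_le ((↑T : Set G) ∪ {x}) P ?_ v
    rintro g hg (hgT | hgx)
    · exact ⟨1, Nat.one_pos, by
        rw [pow_one]
        exact aux_mem_sup_left (Subgroup.mem_subgroupOf.mpr (hTH hgT))⟩
    · refine ⟨n, hn, ?_⟩
      have : (⟨g, hg⟩ : ↥F) = ⟨x, hxF⟩ := Subtype.ext hgx
      rw [this]
      exact hxWF
  obtain ⟨c, hc⟩ := Subgroup.nilpotent_iff_lowerCentralSeries.mp hnil
  obtain ⟨k, hk, hkmem⟩ := aux_thmD c ↥F (H.subgroupOf F) hc hPtop ⟨x, hxF⟩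
  refine ⟨k, hk, ?_⟩
  have := Subgroup.mem_subgroupOf.mp hkmem
  simpa using this

end Assembly

/-- Let `H` be a subgroup of a locally nilpotent group `G`.  Then either `G = I_G(H)`
(every element of `G` has a positive power in `H`), or there is an infinite cyclic
section between `H` and `G`. -/
theorem isolator_eq_top_or_infinite_cyclic_section {G : Type u} [Group G]
    (hG : IsLocallyNilpotent G) (H : Subgroup G) :
    (∀ g : G, ∃ n : ℕ, 0 < n ∧ g ^ n ∈ H) ∨
      (∃ (U : Subgroup G) (V : Subgroup U) (hn : V.Normal), H ≤ U ∧ H.subgroupOf U ≤ V ∧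
        (letI : V.Normal := hn
         IsCyclic (U ⧸ V) ∧ Infinite (U ⧸ V))) := by
  classical
  by_cases hiso : ∀ g : G, ∃ n : ℕ, 0 < n ∧ g ^ n ∈ H
  · exact Or.inl hiso
  · right
    push_neg at hiso
    obtain ⟨x, hx⟩ := hiso
    set U : Subgroup G := Subgroup.closure (↑H ∪ {x}) with hUdef
    have hxU : x ∈ U := Subgroup.subset_closure (Or.inr rfl)
    have hHU : H ≤ U := fun h hh => Subgroup.subset_closure (Or.inl hh)
    have hcase : ∀ n : ℕ, 0 < n → x ^ n ∉ H ⊔ ⁅U, U⁆ := by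
      intro n hn hmem
      obtain ⟨k, hk, hkH⟩ := aux_keylemma hG H x n hn hmem
      exact hx k hk hkH
    set W : Subgroup ↥U := H.subgroupOf U ⊔ commutator ↥U with hWdef
    haveI hWnormal : W.Normal := aux_normal_of_commutator_le le_sup_right
    have hmapW : Subgroup.map U.subtype W ≤ H ⊔ ⁅U, U⁆ := by
      rw [hWdef, Subgroup.map_sup]
      apply sup_le
      · rw [Subgroup.subgroupOf_map_subtype]
        exact inf_le_left.trans le_sup_left
      · have h2 : Subgroup.map U.subtype (commutator ↥U) = ⁅U, U⁆ := by
          rw [_root_.commutator_def, Subgroup.map_commutator]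
          congr 1 <;> rw [← MonoidHom.range_eq_map, Subgroup.range_subtype]
        rw [h2]
        exact le_sup_right
    have hxnW : ∀ n : ℕ, 0 < n → ((⟨x, hxU⟩ : ↥U) ^ n ∉ W) := by
      intro n hn hmem
      apply hcase n hn
      have hmap : x ^ n ∈ Subgroup.map U.subtype W :=
        ⟨(⟨x, hxU⟩ : ↥U) ^ n, hmem, by simp⟩
      exact hmapW hmap
    refine ⟨U, W, hWnormal, hHU, le_sup_left, ?_, ?_⟩
    · -- IsCyclic
      refine ⟨⟨QuotientGroup.mk' W ⟨x, hxU⟩, fun y => ?_⟩⟩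
      obtain ⟨v, rfl⟩ := QuotientGroup.mk'_surjective W y
      have hv : v ∈ Subgroup.comap (QuotientGroup.mk' W)
          (Subgroup.zpowers (QuotientGroup.mk' W ⟨x, hxU⟩)) := by
        refine aux_closure_subtype_le ((↑H : Set G) ∪ {x}) _ ?_ v
        rintro g hg (hgH | hgx)
        · rw [Subgroup.mem_comap]
          have h1 : QuotientGroup.mk' W (⟨g, hg⟩ : ↥U) = 1 :=
            (QuotientGroup.eq_one_iff _).mpr
              (aux_mem_sup_left (Subgroup.mem_subgroupOf.mpr hgH))
          rw [h1]
          exact Subgroup.one_mem _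
        · rw [Subgroup.mem_comap]
          have h1 : (⟨g, hg⟩ : ↥U) = ⟨x, hxU⟩ := Subtype.ext hgx
          rw [h1]
          exact Subgroup.mem_zpowers _
      rw [Subgroup.mem_comap] at hv
      obtain ⟨i, hi⟩ := Subgroup.mem_zpowers_iff.mp hv
      exact ⟨i, hi⟩
    · -- Infinite
      rw [← not_finite_iff_infinite]
      intro hfin
      haveI := hfin
      have h1 : (0 : ℕ) < orderOf (QuotientGroup.mk' W ⟨x, hxU⟩) := orderOf_pos _
      have h2 := pow_orderOf_eq_one (QuotientGroup.mk' W ⟨x, hxU⟩)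
      rw [← map_pow] at h2
      exact hxnW _ h1 ((QuotientGroup.eq_one_iff _).mp h2)
end
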